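/- arXiv:2512.10154 — 2 statements merged into one kernel-verified Lean document; each statement's English description precedes it below -/
import Mathlib

section
/- The structures (ℕ,<) and (ℤ,<) admit no dimension function: 𝔫_dim((ℕ,<)) = 𝔫_dim((ℤ,<)) = 0. -/
open FirstOrder FirstOrder.Language Set

universe u v w

namespace PaperDim

section Core

variable (L : FirstOrder.Language.{v, w}) (M : Type u) [L.Structure M]

/-- The collection of definable subsets of `M^n` (definable with parameters from `M`). -/
abbrev DefSet (n : ℕ) : Type u :=
  {X : Set (Fin n → M) // Set.Definable (Set.univ : Set M) L X}

variable {L M}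

/-- A definable subset of `M^1` viewed as a subset of `M`. -/
def asSet1 (X : Set (Fin 1 → M)) : Set M := {a : M | (fun _ => a) ∈ X}

/-- The fiber of `X ⊆ M^{n+1}` over `x ∈ M^n`, as a subset of `M^1`. -/
def fiber {n : ℕ} (X : Set (Fin (n + 1) → M)) (x : Fin n → M) : Set (Fin 1 → M) :=
  {y | Fin.snoc x (y 0) ∈ X}

/-- Condition (1) of a dimension function: `dim ∅ = -∞`, `dim {a} = 0`, `dim M = 1`.
Here `d k` is the value of the dimension function on definable subsets of `M^{k+1}`. -/
def Cond1 (d : ∀ n : ℕ, DefSet L M (n + 1) → WithBot ℕ) : Prop :=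
  (∀ X : DefSet L M 1, X.1 = ∅ → d 0 X = ⊥) ∧
  (∀ (X : DefSet L M 1) (a : M), X.1 = ({fun _ => a} : Set (Fin 1 → M)) → d 0 X = 0) ∧
  (∀ X : DefSet L M 1, X.1 = (Set.univ : Set (Fin 1 → M)) → d 0 X = 1)

/-- Condition (2)ₙ (at arity `n + 1`): `dim (X ∪ Y) = max (dim X) (dim Y)`. -/
def Cond2 (d : ∀ n : ℕ, DefSet L M (n + 1) → WithBot ℕ) (n : ℕ) : Prop :=
  ∀ X Y Z : DefSet L M (n + 1), Z.1 = X.1 ∪ Y.1 → d n Z = max (d n X) (d n Y)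

/-- Condition (3)ₙ (at arity `n + 1`): invariance under coordinate permutations. -/
def Cond3 (d : ∀ n : ℕ, DefSet L M (n + 1) → WithBot ℕ) (n : ℕ) : Prop :=
  ∀ (σ : Equiv.Perm (Fin (n + 1))) (X Y : DefSet L M (n + 1)),
    Y.1 = {y : Fin (n + 1) → M | y ∘ σ ∈ X.1} → d n Y = d n X

/-- Condition (3'): invariance under switching the two coordinates, at arity 2. -/
def Cond3' (d : ∀ n : ℕ, DefSet L M (n + 1) → WithBot ℕ) : Prop :=
  ∀ X Y : DefSet L M 2, Y.1 = {v : Fin 2 → M | ![v 1, v 0] ∈ X.1} → d 1 Y = d 1 X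

/-- Condition (4)ₙ, the addition property (at arity `n + 2`):
the set `X(i)` of points over which the fiber of `X` has dimension `i` is definable, and
`dim (X ∩ Π⁻¹(X(i))) = dim X(i) + i`. -/
def Cond4 (d : ∀ n : ℕ, DefSet L M (n + 1) → WithBot ℕ) (n : ℕ) : Prop :=
  ∀ (X : DefSet L M (n + 2)) (i : Fin 2),
    ∃ (Xi : DefSet L M (n + 1)) (W : DefSet L M (n + 2)),
      Xi.1 = {x : Fin (n + 1) → M |
        ∃ hf : Set.Definable (Set.univ : Set M) L (fiber X.1 x),
          d 0 ⟨fiber X.1 x, hf⟩ = ((i : ℕ) : WithBot ℕ)} ∧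
      W.1 = X.1 ∩ (fun z : Fin (n + 2) → M => z ∘ Fin.castSucc) ⁻¹' Xi.1 ∧
      d (n + 1) W = d n Xi + ((i : ℕ) : WithBot ℕ)

/-- A dimension function on the structure `M` (van den Dries). -/
def IsDimFun (d : ∀ n : ℕ, DefSet L M (n + 1) → WithBot ℕ) : Prop :=
  Cond1 d ∧ (∀ n, Cond2 d n) ∧ (∀ n, Cond3 d n) ∧ (∀ n, Cond4 d n)

/-- A weak dimension function: conditions (1), (2)₁, (3') and (4)ₙ for all `n > 1`. -/
def IsWeakDimFun (d : ∀ n : ℕ, DefSet L M (n + 1) → WithBot ℕ) : Prop :=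
  Cond1 d ∧ Cond2 d 0 ∧ Cond3' d ∧ (∀ n, Cond4 d n)

variable (L M)

/-- The set `DIM(M)` of dimension functions on `M`. -/
def DimFuns : Set (∀ n : ℕ, DefSet L M (n + 1) → WithBot ℕ) := {d | IsDimFun d}

/-- `𝔫_dim(M)`: the cardinality of the set of dimension functions on `M`. -/
noncomputable def nDim : Cardinal := Cardinal.mk (DimFuns L M)

/-- The order `<` is definable in the structure. -/
def LtDefinable [LT M] : Prop :=
  Set.Definable (Set.univ : Set M) L {v : Fin 2 → M | v 0 < v 1}

/-- The graph of addition is definable in the structure. -/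
def AddDefinable [Add M] : Prop :=
  Set.Definable (Set.univ : Set M) L {v : Fin 3 → M | v 0 + v 1 = v 2}

/-- The graph of multiplication is definable in the structure. -/
def MulDefinable [Mul M] : Prop :=
  Set.Definable (Set.univ : Set M) L {v : Fin 3 → M | v 0 * v 1 = v 2}

end Core

/-- The order topology on a linear order, generated by open rays. -/
def orderTop (α : Type*) [LinearOrder α] : TopologicalSpace α :=
  TopologicalSpace.generateFrom {s : Set α | (∃ a, s = Set.Ioi a) ∨ (∃ a, s = Set.Iio a)}

/-- A set is discrete (w.r.t. a topology `t`) if all of its points are isolated in it. -/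
def DiscreteIn {α : Type*} (t : TopologicalSpace α) (D : Set α) : Prop :=
  ∀ x ∈ D, ∃ U : Set α, t.IsOpen U ∧ U ∩ D = {x}

/-- An open interval: a nonempty set of the form `(a, b)` with `a, b ∈ M ∪ {±∞}`. -/
def IsOpenInterval {α : Type*} [Preorder α] (S : Set α) : Prop :=
  S.Nonempty ∧ ((∃ a b, S = Set.Ioo a b) ∨ (∃ a, S = Set.Ioi a) ∨
    (∃ b, S = Set.Iio b) ∨ S = Set.univ)

section Ord

variable (L : FirstOrder.Language.{v, w}) (M : Type u) [L.Structure M]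

/-- O-minimality: every definable subset of `M` is a union of a finite set and finitely many
open intervals. -/
def OMinimal [LinearOrder M] : Prop :=
  ∀ X : DefSet L M 1, ∃ (F : Set M) (k : ℕ) (C : Fin k → Set M),
    F.Finite ∧ (∀ i, IsOpenInterval (C i)) ∧ asSet1 X.1 = F ∪ ⋃ i, C i

/-- Weak o-minimality: every definable subset of `M` is a union of finitely many convex sets. -/
def WeaklyOMinimal [LinearOrder M] : Prop :=
  ∀ X : DefSet L M 1, ∃ (k : ℕ) (C : Fin k → Set M),
    (∀ i, (C i).OrdConnected) ∧ asSet1 X.1 = ⋃ i, C i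

/-- Definable completeness: every definable subset of `M` has a supremum and an infimum in
`M ∪ {±∞}`. -/
def DefinablyComplete [LinearOrder M] : Prop :=
  ∀ X : DefSet L M 1,
    ((asSet1 X.1).Nonempty → BddAbove (asSet1 X.1) → ∃ a, IsLUB (asSet1 X.1) a) ∧
    ((asSet1 X.1).Nonempty → BddBelow (asSet1 X.1) → ∃ a, IsGLB (asSet1 X.1) a)

/-- d-minimality: the structure is definably complete and in every elementarily equivalent
structure, every definable subset of the universe is a union of an open set and finitely many
discrete sets. The linear order is assumed to be the interpretation of the relation symbol `lt`. -/
def DMinimal [LinearOrder M] (lt : L.Relations 2) : Prop :=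
  DefinablyComplete L M ∧
  ∀ (N : Type u) [L.Structure N] [LinearOrder N],
    (∀ a b : N, Structure.RelMap lt ![a, b] ↔ a < b) →
    L.ElementarilyEquivalent M N →
    ∀ X : DefSet L N 1,
      ∃ (U : Set N) (k : ℕ) (D : Fin k → Set N),
        (orderTop N).IsOpen U ∧ (∀ i, DiscreteIn (orderTop N) (D i)) ∧
        asSet1 X.1 = U ∪ ⋃ i, D i

end Ord

open scoped Classical in
/-- The topological dimension of a definable set: the largest `d` such that the image of the
set under some coordinate projection `M^n → M^d` has nonempty interior (w.r.t. the order
topology and the corresponding product topologies). -/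
noncomputable def dimTop {M : Type u} [LinearOrder M] {n : ℕ} (X : Set (Fin n → M)) :
    WithBot ℕ :=
  if X = ∅ then ⊥
  else
    ↑(sSup {d : ℕ | ∃ f : Fin d → Fin n, Function.Injective f ∧
      (@interior (Fin d → M) (@Pi.topologicalSpace (Fin d) (fun _ => M) (fun _ => orderTop M))
        ((fun x : Fin n → M => x ∘ f) '' X)).Nonempty})


/-! ### Extra notions -/

/-- `G ⊆ M²` is the graph of a bijection from `A` onto `B`. -/
def IsDefBijectionGraph {M : Type u} (G : Set (Fin 2 → M)) (A B : Set M) : Prop :=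
  (∀ v ∈ G, v 0 ∈ A ∧ v 1 ∈ B) ∧
  (∀ x ∈ A, ∃! y : M, (![x, y] : Fin 2 → M) ∈ G) ∧
  (∀ y ∈ B, ∃! x : M, (![x, y] : Fin 2 → M) ∈ G)

section Extra

variable (L : FirstOrder.Language.{v, w}) (M : Type u) [L.Structure M]

/-- A definable set `I ⊆ M` is self-sufficient if it is infinite and there is no definable
bijection between an infinite definable subset of `I` and an infinite definable subset of
`M ∖ I`. -/
def SelfSufficient (I : Set M) : Prop :=
  I.Infinite ∧
  ∀ J₁ J₂ : DefSet L M 1, asSet1 J₁.1 ⊆ I → asSet1 J₂.1 ⊆ Iᶜ →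
    (asSet1 J₁.1).Infinite → (asSet1 J₂.1).Infinite →
    ¬ ∃ G : DefSet L M 2, IsDefBijectionGraph G.1 (asSet1 J₁.1) (asSet1 J₂.1)

/-- A self-sufficient set is minimally self-sufficient if every self-sufficient set either
meets it in a finite set or contains it up to a finite set. -/
def MinimallySelfSufficient (I : Set M) : Prop :=
  SelfSufficient L M I ∧
  ∀ X : DefSet L M 1, SelfSufficient L M (asSet1 X.1) →
    (I ∩ asSet1 X.1).Finite ∨ ∃ F : Set M, F.Finite ∧ I ⊆ asSet1 X.1 ∪ F

end Extra

/-- `I₁ ∼_fin I₂`: the symmetric difference is finite. -/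
def FinSymmDiff {M : Type u} (A B : Set M) : Prop := ((A \ B) ∪ (B \ A)).Finite

/-- `I⟨τ⟩`: the product of copies of `I` (where `τ i = false`) and `M ∖ I`
(where `τ i = true`). -/
def Itau {M : Type u} (I : Set M) {n : ℕ} (τ : Fin n → Bool) : Set (Fin n → M) :=
  {v | ∀ i, if τ i then v i ∉ I else v i ∈ I}

open scoped Classical in
/-- The value of `Dim[I]` on a (nonempty) definable set contained in `I⟨τ⟩`. -/
noncomputable def DimIPiece {M : Type u} [LinearOrder M] (I : Set M) :
    (n : ℕ) → (Fin (n + 1) → Bool) → Set (Fin (n + 1) → M) → WithBot ℕ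
  | 0, τ, X =>
    if X = ∅ then ⊥ else if τ 0 then 0 else dimTop X
  | n + 1, τ, X =>
    if X = ∅ then ⊥
    else if τ (Fin.last (n + 1)) then
      DimIPiece I n (fun i => τ i.castSucc)
        ((fun v : Fin (n + 2) → M => v ∘ Fin.castSucc) '' X)
    else
      max (dimTop {x : Fin (n + 1) → M |
              (∃ v ∈ X, v ∘ Fin.castSucc = x) ∧ dimTop (fiber X x) ≠ 1})
        (dimTop {x : Fin (n + 1) → M | dimTop (fiber X x) = 1} + 1)

/-- The function `Dim[I]` associated with a subset `I` of `M` (the input dimension being the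
topological dimension). -/
noncomputable def DimI {M : Type u} [LinearOrder M] (I : Set M) (n : ℕ)
    (X : Set (Fin (n + 1) → M)) : WithBot ℕ :=
  Finset.univ.sup fun τ : Fin (n + 1) → Bool => DimIPiece I n τ (X ∩ Itau I τ)

section Morley

variable (L : FirstOrder.Language.{v, w}) (M : Type u) [L.Structure M]

/-- The model-theoretic algebraic closure of a set of parameters `A`. -/
def aclS (A : Set M) : Set M :=
  {a : M | ∃ s : Set (Fin 1 → M), Set.Definable A L s ∧ s.Finite ∧ (fun _ => a) ∈ s}

open scoped Classical in
/-- The rank `rk^acl(X/A)`: the largest cardinality of a subset of the coordinates of a point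
of `X` that is `acl`-independent over `A` (and `-∞` for `X = ∅`). -/
noncomputable def rkOver {n : ℕ} (A : Set M) (X : Set (Fin n → M)) : WithBot ℕ :=
  if X = ∅ then ⊥
  else
    ↑(sSup {k : ℕ | ∃ x ∈ X, ∃ S : Finset (Fin n), S.card = k ∧
        ∀ i ∈ S, x i ∉ aclS L M (A ∪ x '' {j : Fin n | j ∈ S ∧ j ≠ i})})

/-- A structure is minimal if every definable subset of the universe is finite or cofinite. -/
def MinimalStr : Prop :=
  ∀ X : DefSet L M 1, (asSet1 X.1).Finite ∨ ((asSet1 X.1)ᶜ : Set M).Finite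

/-- A structure is strongly minimal if every elementarily equivalent structure is minimal. -/
def StronglyMinimal : Prop :=
  MinimalStr L M ∧
  ∀ (N : Type u) [L.Structure N], L.ElementarilyEquivalent M N → MinimalStr L N

end Morley

section Theories

/-- A divisible Abelian group structure on a subset `S`, with addition `f`. -/
def DivAbGroupOn {α : Type*} (f : α → α → α) (S : Set α) : Prop :=
  (∀ x ∈ S, ∀ y ∈ S, f x y ∈ S) ∧
  (∀ x ∈ S, ∀ y ∈ S, f x y = f y x) ∧
  (∀ x ∈ S, ∀ y ∈ S, ∀ z ∈ S, f (f x y) z = f x (f y z)) ∧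
  (∃ e ∈ S, (∀ x ∈ S, f e x = x) ∧ (∀ x ∈ S, ∃ y ∈ S, f x y = e)) ∧
  (∀ k : ℕ, 0 < k → ∀ x ∈ S, ∃ y ∈ S, (f y)^[k - 1] y = x)

/-- Embedding of `M` into `M ∪ {±∞}`. -/
def emb {α : Type*} (x : α) : WithBot (WithTop α) := ((x : WithTop α) : WithBot (WithTop α))

/-- `M` is a model of the theory `T_m` of Proposition 3.17: a DLO with constants
`c_1 < ⋯ < c_{m-1}` (recorded here by the boundary sequence
`⊥ = c 0 < c 1 < ⋯ < c m = ⊤` in `M ∪ {±∞}`), such that `+` restricts to a divisible Abelian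
group on each interval `(c_{i-1}, c_i)` and is constantly `c_1` off the union of the
`(c_{i-1}, c_i)²`. -/
def ModelTm (m : ℕ) (hm : 0 < m) (L : FirstOrder.Language.{v, w}) (M : Type u)
    [L.Structure M] [LinearOrder M]
    (lt : L.Relations 2) (plus : L.Functions 2)
    (c : Fin (m + 1) → WithBot (WithTop M)) : Prop :=
  DenselyOrdered M ∧ NoMinOrder M ∧ NoMaxOrder M ∧ Nonempty M ∧
  (∀ x y : M, Structure.RelMap lt ![x, y] ↔ x < y) ∧
  c 0 = ⊥ ∧ c (Fin.last m) = ⊤ ∧ StrictMono c ∧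
  (∀ i : Fin (m + 1), i ≠ 0 → i ≠ Fin.last m → ∃ x : M, c i = emb x) ∧
  (∀ i : Fin m,
    DivAbGroupOn (fun x y : M => Structure.funMap plus ![x, y])
      {x : M | c i.castSucc < emb x ∧ emb x < c i.succ}) ∧
  (∀ x y : M,
    (¬ ∃ i : Fin m, (c i.castSucc < emb x ∧ emb x < c i.succ) ∧
        (c i.castSucc < emb y ∧ emb y < c i.succ)) →
    ∀ z : M, c ⟨1, by omega⟩ = emb z → Structure.funMap plus ![x, y] = z)

/-- The set of realizations of a unary predicate. -/
def relSet (L : FirstOrder.Language.{v, w}) (M : Type u) [L.Structure M]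
    (r : L.Relations 1) : Set M :=
  {x : M | Structure.RelMap r ![x]}

/-- `M` is a model of the theory `T_m` of Theorem 3.18: an ordered divisible Abelian group
with a strictly increasing chain of nontrivial proper convex subgroups `U_1 ⊊ ⋯ ⊊ U_m ⊊ M`. -/
def ModelTw (m : ℕ) (L : FirstOrder.Language.{v, w}) (M : Type u)
    [L.Structure M] [AddCommGroup M] [LinearOrder M] [IsOrderedAddMonoid M]
    (lt : L.Relations 2) (plus : L.Functions 2) (U : Fin m → L.Relations 1) : Prop :=
  (∀ x y : M, Structure.RelMap lt ![x, y] ↔ x < y) ∧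
  (∀ x y : M, Structure.funMap plus ![x, y] = x + y) ∧
  (∀ k : ℕ, 0 < k → ∀ x : M, ∃ y : M, k • y = x) ∧
  (∀ i : Fin m,
    (0 : M) ∈ relSet L M (U i) ∧
    (∀ x ∈ relSet L M (U i), ∀ y ∈ relSet L M (U i), x + y ∈ relSet L M (U i)) ∧
    (∀ x ∈ relSet L M (U i), -x ∈ relSet L M (U i)) ∧
    (relSet L M (U i)).OrdConnected ∧
    relSet L M (U i) ≠ {0} ∧ relSet L M (U i) ≠ Set.univ) ∧
  (∀ i j : Fin m, i < j → relSet L M (U i) ⊂ relSet L M (U j))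

end Theories


/-! ### Auxiliary material for Statement 6 -/

section NoDimAux

instance auxIsOrdered (L : FirstOrder.Language.{v, w}) [L.IsOrdered] (A : Type*) :
    (L[[A]]).IsOrdered := ⟨Sum.inl IsOrdered.leSymb⟩

instance auxOrderedStructure {L : FirstOrder.Language.{v, w}} [L.IsOrdered] {M : Type u}
    [L.Structure M] [LE M] [L.OrderedStructure M] (A : Set M) :
    (L[[↥A]]).OrderedStructure M := by
  constructor
  intro x
  have h : (leSymb : (L[[↥A]]).Relations 2) = Sum.inl (leSymb : L.Relations 2) := rfl
  rw [h, Language.withConstants_relMap_sumInl]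
  exact relMap_leSymb x

variable {L : FirstOrder.Language.{v, w}} {M : Type u} [L.Structure M] [LinearOrder M]
  [L.IsOrdered] [L.OrderedStructure M]

lemma eq_of_fin1 {v w : Fin 1 → M} (h : v 0 = w 0) : v = w :=
  funext fun i => by rw [Subsingleton.elim i 0]; exact h

lemma defLT2 (i j : Fin 2) : Set.Definable (Set.univ : Set M) L {v : Fin 2 → M | v i < v j} := by
  refine ⟨Term.lt (L := L[[↥(Set.univ : Set M)]]) (Term.var (Sum.inl i)) (Term.var (Sum.inl j)),
    ?_⟩
  ext v
  simp [Formula.Realize, Term.realize_lt]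

lemma defLTc (a : M) : Set.Definable (Set.univ : Set M) L {v : Fin 1 → M | v 0 < a} := by
  refine ⟨Term.lt (L := L[[↥(Set.univ : Set M)]]) (Term.var (Sum.inl 0))
    ((L.con ⟨a, Set.mem_univ a⟩).term), ?_⟩
  ext v
  simp [Formula.Realize, Term.realize_lt]

lemma defGTc (a : M) : Set.Definable (Set.univ : Set M) L {v : Fin 1 → M | a < v 0} := by
  refine ⟨Term.lt (L := L[[↥(Set.univ : Set M)]]) ((L.con ⟨a, Set.mem_univ a⟩).term)
    (Term.var (Sum.inl 0)), ?_⟩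
  ext v
  simp [Formula.Realize, Term.realize_lt]

lemma defEQc (a : M) : Set.Definable (Set.univ : Set M) L {v : Fin 1 → M | v 0 = a} := by
  refine ⟨Term.equal (L := L[[↥(Set.univ : Set M)]]) (Term.var 0)
    ((L.con ⟨a, Set.mem_univ a⟩).term), ?_⟩
  ext v
  simp [Formula.realize_equal]

lemma defLTc2 (i : Fin 2) (a : M) :
    Set.Definable (Set.univ : Set M) L {v : Fin 2 → M | v i < a} := by
  refine ⟨Term.lt (L := L[[↥(Set.univ : Set M)]]) (Term.var (Sum.inl i))
    ((L.con ⟨a, Set.mem_univ a⟩).term), ?_⟩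
  ext v
  simp [Formula.Realize, Term.realize_lt]

lemma defGTc2 (i : Fin 2) (a : M) :
    Set.Definable (Set.univ : Set M) L {v : Fin 2 → M | a < v i} := by
  refine ⟨Term.lt (L := L[[↥(Set.univ : Set M)]]) ((L.con ⟨a, Set.mem_univ a⟩).term)
    (Term.var (Sum.inl i)), ?_⟩
  ext v
  simp [Formula.Realize, Term.realize_lt]

lemma defCov2 (i j : Fin 2) : Set.Definable (Set.univ : Set M) L
    {v : Fin 2 → M | v i < v j ∧ ¬ ∃ z : M, v i < z ∧ z < v j} := by
  refine ⟨(Term.lt (L := L[[↥(Set.univ : Set M)]]) (Term.var (Sum.inl i))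
      (Term.var (Sum.inl j))) ⊓
    ∼((Term.lt (L := L[[↥(Set.univ : Set M)]]) (Term.var (Sum.inl i))
        (Term.var (Sum.inr (0 : Fin 1))) ⊓
      Term.lt (Term.var (Sum.inr (0 : Fin 1))) (Term.var (Sum.inl j))).ex), ?_⟩
  ext v
  simp [Formula.Realize, Term.realize_lt, Fin.snoc]

/-! #### Numeric helpers in `WithBot ℕ` -/

lemma wb_not_one_le_zero : ¬ ((1 : WithBot ℕ) ≤ 0) := by
  intro h
  exact absurd (by exact_mod_cast h : (1 : ℕ) ≤ 0) (by omega)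

lemma wb_max_eq_one_left {a b : WithBot ℕ} (h : max a b = 1) (hb : b ≤ 0) : a = 1 := by
  rcases le_or_gt a b with hab | hab
  · rw [max_eq_right hab] at h
    exact absurd (h ▸ hb) wb_not_one_le_zero
  · rwa [max_eq_left hab.le] at h

lemma wb_max_eq_one_right {a b : WithBot ℕ} (h : max a b = 1) (ha : a ≤ 0) : b = 1 :=
  wb_max_eq_one_left (by rwa [max_comm]) ha

lemma wb_zero_one {a : WithBot ℕ} (h0 : 0 ≤ a) (h1 : a ≤ 1) : a = 0 ∨ a = 1 := by
  induction a using WithBot.recBotCoe with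
  | bot => exact absurd h0 (by simp)
  | coe n =>
    have hn1 : n ≤ 1 := by
      rw [show (1 : WithBot ℕ) = ((1 : ℕ) : WithBot ℕ) from rfl] at h1
      exact WithBot.coe_le_coe.mp h1
    interval_cases n
    · exact Or.inl rfl
    · exact Or.inr rfl

lemma wb_one_ne_two : (1 : WithBot ℕ) ≠ 1 + 1 := by
  intro h
  have : (1 : ℕ) = 1 + 1 := by exact_mod_cast h
  omega

/-! #### Basic properties of dimension functions -/

variable {d : ∀ n : ℕ, DefSet L M (n + 1) → WithBot ℕ}

lemma dCongr {n : ℕ} {X Y : DefSet L M (n + 1)} (h : X.1 = Y.1) : d n X = d n Y :=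
  congrArg (d n) (Subtype.ext h)

lemma dEmpty (hd : IsDimFun d) {S : Set (Fin 1 → M)} {hS : Set.Definable Set.univ L S}
    (h : S = ∅) : d 0 ⟨S, hS⟩ = ⊥ := hd.1.1 _ h

lemma dSing (hd : IsDimFun d) {S : Set (Fin 1 → M)} {hS : Set.Definable Set.univ L S} {a : M}
    (h : S = {v | v 0 = a}) : d 0 ⟨S, hS⟩ = 0 := by
  subst h
  refine hd.1.2.1 _ a ?_
  ext v
  simp only [Set.mem_setOf_eq, Set.mem_singleton_iff]
  exact ⟨fun hv => eq_of_fin1 hv, fun hv => by rw [hv]⟩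

lemma dUniv (hd : IsDimFun d) {S : Set (Fin 1 → M)} {hS : Set.Definable Set.univ L S}
    (h : S = Set.univ) : d 0 ⟨S, hS⟩ = 1 := hd.1.2.2 _ h

lemma dUnion (hd : IsDimFun d) {S T U : Set (Fin 1 → M)} (hS : Set.Definable Set.univ L S)
    (hT : Set.Definable Set.univ L T) {hU : Set.Definable Set.univ L U} (h : U = S ∪ T) :
    d 0 ⟨U, hU⟩ = max (d 0 ⟨S, hS⟩) (d 0 ⟨T, hT⟩) := hd.2.1 0 ⟨S, hS⟩ ⟨T, hT⟩ ⟨U, hU⟩ h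

lemma dMono (hd : IsDimFun d) {S T : Set (Fin 1 → M)} {hS : Set.Definable Set.univ L S}
    {hT : Set.Definable Set.univ L T} (h : S ⊆ T) : d 0 ⟨S, hS⟩ ≤ d 0 ⟨T, hT⟩ := by
  have hu := dUnion hd hS hT (hU := hT) (Set.union_eq_self_of_subset_left h).symm
  rw [hu]
  exact le_max_left _ _

lemma dLe1 (hd : IsDimFun d) {S : Set (Fin 1 → M)} {hS : Set.Definable Set.univ L S} :
    d 0 ⟨S, hS⟩ ≤ 1 := by
  have h := dMono hd (hS := hS) (hT := Set.definable_univ) (Set.subset_univ S)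
  rwa [dUniv hd rfl] at h

lemma defFinset (t : Finset M) :
    Set.Definable (Set.univ : Set M) L {v : Fin 1 → M | v 0 ∈ t} := by
  classical
  induction t using Finset.induction_on with
  | empty => simpa using (Set.definable_empty : Set.Definable (Set.univ : Set M) L ∅)
  | @insert a t ha ih =>
    have h : {v : Fin 1 → M | v 0 ∈ insert a t} = {v | v 0 = a} ∪ {v | v 0 ∈ t} := by
      ext v; simp
    rw [h]
    exact (defEQc a).union ih

lemma dFinsetLe (hd : IsDimFun d) (t : Finset M) {S : Set (Fin 1 → M)}
    {hS : Set.Definable Set.univ L S} (h : S = {v | v 0 ∈ t}) : d 0 ⟨S, hS⟩ ≤ 0 := by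
  classical
  induction t using Finset.induction_on generalizing S with
  | empty =>
    rw [dEmpty hd (by simpa using h)]
    exact bot_le
  | @insert a t ha ih =>
    have hu : S = {v : Fin 1 → M | v 0 = a} ∪ {v | v 0 ∈ t} := by
      rw [h]; ext v; simp
    rw [dUnion hd (defEQc a) (defFinset t) hu]
    exact max_le (le_of_eq (dSing hd rfl)) (ih rfl)

lemma dFinLe (hd : IsDimFun d) {S : Set (Fin 1 → M)} {hS : Set.Definable Set.univ L S}
    (h : S.Finite) : d 0 ⟨S, hS⟩ ≤ 0 := by
  classical
  refine dFinsetLe hd (h.image fun v => v 0).toFinset ?_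
  ext v
  simp only [Set.Finite.mem_toFinset, Set.mem_image, Set.mem_setOf_eq]
  constructor
  · intro hv
    exact ⟨v, hv, rfl⟩
  · rintro ⟨w, hw, hw0⟩
    rwa [eq_of_fin1 hw0.symm]

lemma dFinPos (hd : IsDimFun d) {S : Set (Fin 1 → M)} {hS : Set.Definable Set.univ L S}
    (hfin : S.Finite) (hne : S.Nonempty) : d 0 ⟨S, hS⟩ = 0 := by
  refine le_antisymm (dFinLe hd hfin) ?_
  obtain ⟨w, hw⟩ := hne
  have hsub : {v : Fin 1 → M | v 0 = w 0} ⊆ S := fun v hv => (eq_of_fin1 hv) ▸ hw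
  have hle := dMono hd (hS := defEQc (w 0)) (hT := hS) hsub
  rwa [dSing hd rfl] at hle

lemma fin1_preimage_finite {S : Set M} (h : S.Finite) :
    ({v : Fin 1 → M | v 0 ∈ S}).Finite := by
  have he : {v : Fin 1 → M | v 0 ∈ S} = (fun v : Fin 1 → M => v 0) ⁻¹' S := rfl
  rw [he]
  exact Set.Finite.preimage (fun a _ b _ hab => eq_of_fin1 hab) h

lemma dCofin (hd : IsDimFun d) {S : Set (Fin 1 → M)} {hS : Set.Definable Set.univ L S}
    (h : (Sᶜ).Finite) : d 0 ⟨S, hS⟩ = 1 := by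
  have hu := dUnion hd hS.compl hS (hU := Set.definable_univ) (Set.compl_union_self S).symm
  rw [dUniv hd rfl] at hu
  exact wb_max_eq_one_right hu.symm (dFinLe hd h)

/-! #### Extracting information from condition (4) -/

lemma cond4_zero (hd : IsDimFun d) (X : DefSet L M 2) (S : Set (Fin 1 → M))
    (h0 : ∀ x : Fin 1 → M, x ∈ S → ∃ hf : Set.Definable (Set.univ : Set M) L (fiber X.1 x),
        d 0 ⟨fiber X.1 x, hf⟩ = 0)
    (h1 : ∀ x : Fin 1 → M, x ∉ S → fiber X.1 x = ∅)
    (hproj : ∀ v ∈ X.1, v ∘ Fin.castSucc ∈ S) :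
    ∃ hS : Set.Definable (Set.univ : Set M) L S, d 1 X = d 0 ⟨S, hS⟩ := by
  obtain ⟨Xi, W, hXi, hW, hdW⟩ := hd.2.2.2 0 X 0
  have hcast : ((((0 : Fin 2) : ℕ)) : WithBot ℕ) = 0 := by norm_num
  rw [hcast] at hXi hdW
  have hXiS : Xi.1 = S := by
    rw [hXi]
    ext x
    simp only [Set.mem_setOf_eq]
    constructor
    · rintro ⟨hf, hval⟩
      by_contra hx
      rw [dEmpty hd (h1 x hx)] at hval
      exact absurd hval (by simp)
    · intro hx
      exact h0 x hx
  have hWX : W = X := by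
    refine Subtype.ext ?_
    rw [hW, hXiS]
    exact Set.inter_eq_left.2 hproj
  refine ⟨hXiS ▸ Xi.2, ?_⟩
  rw [← hWX, hdW, add_zero]
  exact dCongr hXiS

lemma cond4_one (hd : IsDimFun d) (X : DefSet L M 2) (S : Set (Fin 1 → M))
    (h0 : ∀ x : Fin 1 → M, x ∈ S → ∃ hf : Set.Definable (Set.univ : Set M) L (fiber X.1 x),
        d 0 ⟨fiber X.1 x, hf⟩ = 1)
    (h1 : ∀ x : Fin 1 → M, x ∉ S → fiber X.1 x = ∅)
    (hproj : ∀ v ∈ X.1, v ∘ Fin.castSucc ∈ S) :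
    ∃ hS : Set.Definable (Set.univ : Set M) L S, d 1 X = d 0 ⟨S, hS⟩ + 1 := by
  obtain ⟨Xi, W, hXi, hW, hdW⟩ := hd.2.2.2 0 X 1
  have hcast : ((((1 : Fin 2) : ℕ)) : WithBot ℕ) = 1 := by norm_num
  rw [hcast] at hXi hdW
  have hXiS : Xi.1 = S := by
    rw [hXi]
    ext x
    simp only [Set.mem_setOf_eq]
    constructor
    · rintro ⟨hf, hval⟩
      by_contra hx
      rw [dEmpty hd (h1 x hx)] at hval
      exact absurd hval (by simp)
    · intro hx
      exact h0 x hx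
  have hWX : W = X := by
    refine Subtype.ext ?_
    rw [hW, hXiS]
    exact Set.inter_eq_left.2 hproj
  refine ⟨hXiS ▸ Xi.2, ?_⟩
  rw [← hWX, hdW]
  exact congrArg (fun t => t + 1) (dCongr hXiS)

lemma dSwapEq (hd : IsDimFun d) (X Y : DefSet L M 2)
    (h : Y.1 = {y : Fin 2 → M | y ∘ Equiv.swap 0 1 ∈ X.1}) : d 1 Y = d 1 X :=
  hd.2.2.1 1 (Equiv.swap 0 1) X Y h

lemma dPI {S : Set (Fin 1 → M)} (h1 h2 : Set.Definable Set.univ L S) :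
    d 0 ⟨S, h1⟩ = d 0 ⟨S, h2⟩ := dCongr rfl

lemma defAnd {P Q : (Fin 2 → M) → Prop} (h1 : Set.Definable (Set.univ : Set M) L {v | P v})
    (h2 : Set.Definable (Set.univ : Set M) L {v | Q v}) :
    Set.Definable (Set.univ : Set M) L {v : Fin 2 → M | P v ∧ Q v} := h1.inter h2

lemma defAnd1 {P Q : (Fin 1 → M) → Prop} (h1 : Set.Definable (Set.univ : Set M) L {v | P v})
    (h2 : Set.Definable (Set.univ : Set M) L {v | Q v}) :
    Set.Definable (Set.univ : Set M) L {v : Fin 1 → M | P v ∧ Q v} := h1.inter h2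

end NoDimAux

section ConcreteNoDim

attribute [local instance] Language.orderStructure

instance auxOrderStructureOrdered {M : Type u} [LE M] :
    @Language.order.OrderedStructure M _ _ (Language.orderStructure M) :=
  ⟨fun _ => Iff.rfl⟩

theorem nat_no_dimfun (d : ∀ n : ℕ, DefSet Language.order ℕ (n + 1) → WithBot ℕ)
    (hd : IsDimFun d) : False := by
  have fibX : ∀ x : Fin 1 → ℕ,
      fiber ({v : Fin 2 → ℕ | v 1 < v 0}) x = {y : Fin 1 → ℕ | y 0 < x 0} := by
    intro x
    ext y
    simp [fiber, Fin.snoc, Fin.castPred_zero]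
  obtain ⟨hS, hdX⟩ := cond4_zero hd ⟨{v : Fin 2 → ℕ | v 1 < v 0}, defLT2 1 0⟩
    {x : Fin 1 → ℕ | 0 < x 0}
    (fun x hx => by
      rw [show fiber (({v : Fin 2 → ℕ | v 1 < v 0} : Set (Fin 2 → ℕ))) x
        = {y : Fin 1 → ℕ | y 0 < x 0} from fibX x]
      refine ⟨defLTc (x 0), dFinPos hd ?_ ⟨fun _ => 0, hx⟩⟩
      exact fin1_preimage_finite (Set.finite_Iio (x 0)))
    (fun x hx => by
      rw [show fiber (({v : Fin 2 → ℕ | v 1 < v 0} : Set (Fin 2 → ℕ))) x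
        = {y : Fin 1 → ℕ | y 0 < x 0} from fibX x]
      have hx' : ¬ 0 < x 0 := hx
      ext y
      simp only [Set.mem_setOf_eq, Set.mem_empty_iff_false, iff_false]
      omega)
    (fun v hv => by
      have hv' : v 1 < v 0 := hv
      simp only [Set.mem_setOf_eq, Function.comp_apply, Fin.castSucc_zero]
      omega)
  have hdX1 : d 1 ⟨{v : Fin 2 → ℕ | v 1 < v 0}, defLT2 1 0⟩ = 1 := by
    rw [hdX]
    refine dCofin hd ?_
    have hc : ({x : Fin 1 → ℕ | 0 < x 0})ᶜ = {x : Fin 1 → ℕ | x 0 ∈ ({0} : Set ℕ)} := by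
      ext x
      simp only [Set.mem_compl_iff, Set.mem_setOf_eq, Set.mem_singleton_iff]
      omega
    rw [hc]
    exact fin1_preimage_finite (Set.finite_singleton 0)
  have hYX : d 1 ⟨{v : Fin 2 → ℕ | v 0 < v 1}, defLT2 0 1⟩
      = d 1 ⟨{v : Fin 2 → ℕ | v 1 < v 0}, defLT2 1 0⟩ := by
    refine dSwapEq hd _ _ ?_
    ext y
    simp only [Set.mem_setOf_eq, Function.comp_apply, Equiv.swap_apply_left,
      Equiv.swap_apply_right]
  have fibY : ∀ x : Fin 1 → ℕ,
      fiber ({v : Fin 2 → ℕ | v 0 < v 1}) x = {y : Fin 1 → ℕ | x 0 < y 0} := by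
    intro x
    ext y
    simp [fiber, Fin.snoc, Fin.castPred_zero]
  obtain ⟨hS', hdY⟩ := cond4_one hd ⟨{v : Fin 2 → ℕ | v 0 < v 1}, defLT2 0 1⟩ Set.univ
    (fun x _ => by
      rw [show fiber (({v : Fin 2 → ℕ | v 0 < v 1} : Set (Fin 2 → ℕ))) x
        = {y : Fin 1 → ℕ | x 0 < y 0} from fibY x]
      refine ⟨defGTc (x 0), dCofin hd ?_⟩
      have hc : ({y : Fin 1 → ℕ | x 0 < y 0})ᶜ = {y : Fin 1 → ℕ | y 0 ∈ Set.Iic (x 0)} := by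
        ext y
        simp only [Set.mem_compl_iff, Set.mem_setOf_eq, Set.mem_Iic]
        omega
      rw [hc]
      exact fin1_preimage_finite (Set.finite_Iic (x 0)))
    (fun x hx => absurd (Set.mem_univ x) hx)
    (fun v _ => Set.mem_univ _)
  rw [hYX, hdX1, dUniv hd rfl] at hdY
  exact wb_one_ne_two hdY


theorem int_no_dimfun (d : ∀ n : ℕ, DefSet Language.order ℤ (n + 1) → WithBot ℕ)
    (hd : IsDimFun d) : False := by
  classical
  have covIff : ∀ u w : ℤ, (u < w ∧ ¬ ∃ z : ℤ, u < z ∧ z < w) ↔ w = u + 1 := by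
    intro u w
    constructor
    · rintro ⟨h1, h2⟩
      by_contra hne
      exact h2 ⟨u + 1, by omega, by omega⟩
    · rintro rfl
      exact ⟨by omega, by rintro ⟨z, hz1, hz2⟩; omega⟩
  -- definability of the four "successor graph" sets
  have defG : ∀ c : ℤ, Set.Definable (Set.univ : Set ℤ) Language.order
      {v : Fin 2 → ℤ | c < v 0 ∧ v 1 = v 0 + 1} := by
    intro c
    have h : {v : Fin 2 → ℤ | c < v 0 ∧ v 1 = v 0 + 1}
        = {v : Fin 2 → ℤ | c < v 0} ∩ {v | v 0 < v 1 ∧ ¬ ∃ z : ℤ, v 0 < z ∧ z < v 1} := by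
      ext v
      simp only [Set.mem_setOf_eq, Set.mem_inter_iff]
      rw [covIff (v 0) (v 1)]
    rw [h]
    exact (defGTc2 0 c).inter (defCov2 0 1)
  have defH : ∀ c : ℤ, Set.Definable (Set.univ : Set ℤ) Language.order
      {v : Fin 2 → ℤ | c < v 1 ∧ v 0 = v 1 + 1} := by
    intro c
    have h : {v : Fin 2 → ℤ | c < v 1 ∧ v 0 = v 1 + 1}
        = {v : Fin 2 → ℤ | c < v 1} ∩ {v | v 1 < v 0 ∧ ¬ ∃ z : ℤ, v 1 < z ∧ z < v 0} := by
      ext v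
      simp only [Set.mem_setOf_eq, Set.mem_inter_iff]
      rw [covIff (v 1) (v 0)]
    rw [h]
    exact (defGTc2 1 c).inter (defCov2 1 0)
  have defG' : ∀ c : ℤ, Set.Definable (Set.univ : Set ℤ) Language.order
      {v : Fin 2 → ℤ | v 0 < c ∧ v 1 = v 0 + 1} := by
    intro c
    have h : {v : Fin 2 → ℤ | v 0 < c ∧ v 1 = v 0 + 1}
        = {v : Fin 2 → ℤ | v 0 < c} ∩ {v | v 0 < v 1 ∧ ¬ ∃ z : ℤ, v 0 < z ∧ z < v 1} := by
      ext v
      simp only [Set.mem_setOf_eq, Set.mem_inter_iff]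
      rw [covIff (v 0) (v 1)]
    rw [h]
    exact (defLTc2 0 c).inter (defCov2 0 1)
  have defH' : ∀ c : ℤ, Set.Definable (Set.univ : Set ℤ) Language.order
      {v : Fin 2 → ℤ | v 1 < c ∧ v 0 = v 1 + 1} := by
    intro c
    have h : {v : Fin 2 → ℤ | v 1 < c ∧ v 0 = v 1 + 1}
        = {v : Fin 2 → ℤ | v 1 < c} ∩ {v | v 1 < v 0 ∧ ¬ ∃ z : ℤ, v 1 < z ∧ z < v 0} := by
      ext v
      simp only [Set.mem_setOf_eq, Set.mem_inter_iff]
      rw [covIff (v 1) (v 0)]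
    rw [h]
    exact (defLTc2 1 c).inter (defCov2 1 0)
  -- d 1 of the G-graphs equals A c, resp. B c
  have hdG : ∀ c : ℤ, d 1 ⟨{v : Fin 2 → ℤ | c < v 0 ∧ v 1 = v 0 + 1}, defG c⟩
      = d 0 ⟨{v : Fin 1 → ℤ | c < v 0}, defGTc c⟩ := by
    intro c
    have hfib : ∀ x : Fin 1 → ℤ, fiber ({v : Fin 2 → ℤ | c < v 0 ∧ v 1 = v 0 + 1}) x
        = {y : Fin 1 → ℤ | c < x 0 ∧ y 0 = x 0 + 1} := by
      intro x; ext y; simp [fiber, Fin.snoc, Fin.castPred_zero]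
    obtain ⟨hS, hdX⟩ := cond4_zero hd ⟨_, defG c⟩ {x : Fin 1 → ℤ | c < x 0}
      (fun x hx => by
        have hx' : c < x 0 := hx
        have hfe : fiber ({v : Fin 2 → ℤ | c < v 0 ∧ v 1 = v 0 + 1} : Set (Fin 2 → ℤ)) x
            = {y : Fin 1 → ℤ | y 0 = x 0 + 1} := by
          rw [hfib x]; ext y; simp only [Set.mem_setOf_eq]; exact and_iff_right hx'
        rw [hfe]
        exact ⟨defEQc (x 0 + 1), dSing hd rfl⟩)
      (fun x hx => by
        have hx' : ¬ c < x 0 := hx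
        rw [hfib x]; ext y
        simp only [Set.mem_setOf_eq, Set.mem_empty_iff_false, iff_false]
        tauto)
      (fun v hv => by
        have hv' : c < v 0 ∧ v 1 = v 0 + 1 := hv
        simp only [Set.mem_setOf_eq, Function.comp_apply, Fin.castSucc_zero]
        exact hv'.1)
    rw [hdX]
  have hdG' : ∀ c : ℤ, d 1 ⟨{v : Fin 2 → ℤ | v 0 < c ∧ v 1 = v 0 + 1}, defG' c⟩
      = d 0 ⟨{v : Fin 1 → ℤ | v 0 < c}, defLTc c⟩ := by
    intro c
    have hfib : ∀ x : Fin 1 → ℤ, fiber ({v : Fin 2 → ℤ | v 0 < c ∧ v 1 = v 0 + 1}) x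
        = {y : Fin 1 → ℤ | x 0 < c ∧ y 0 = x 0 + 1} := by
      intro x; ext y; simp [fiber, Fin.snoc, Fin.castPred_zero]
    obtain ⟨hS, hdX⟩ := cond4_zero hd ⟨_, defG' c⟩ {x : Fin 1 → ℤ | x 0 < c}
      (fun x hx => by
        have hx' : x 0 < c := hx
        have hfe : fiber ({v : Fin 2 → ℤ | v 0 < c ∧ v 1 = v 0 + 1} : Set (Fin 2 → ℤ)) x
            = {y : Fin 1 → ℤ | y 0 = x 0 + 1} := by
          rw [hfib x]; ext y; simp only [Set.mem_setOf_eq]; exact and_iff_right hx'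
        rw [hfe]
        exact ⟨defEQc (x 0 + 1), dSing hd rfl⟩)
      (fun x hx => by
        have hx' : ¬ x 0 < c := hx
        rw [hfib x]; ext y
        simp only [Set.mem_setOf_eq, Set.mem_empty_iff_false, iff_false]
        tauto)
      (fun v hv => by
        have hv' : v 0 < c ∧ v 1 = v 0 + 1 := hv
        simp only [Set.mem_setOf_eq, Function.comp_apply, Fin.castSucc_zero]
        exact hv'.1)
    rw [hdX]
  -- the swapped graphs
  have hdH : ∀ c : ℤ, d 1 ⟨{v : Fin 2 → ℤ | c < v 1 ∧ v 0 = v 1 + 1}, defH c⟩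
      = d 0 ⟨{v : Fin 1 → ℤ | c + 1 < v 0}, defGTc (c + 1)⟩ := by
    intro c
    have hfib : ∀ x : Fin 1 → ℤ, fiber ({v : Fin 2 → ℤ | c < v 1 ∧ v 0 = v 1 + 1}) x
        = {y : Fin 1 → ℤ | c < y 0 ∧ x 0 = y 0 + 1} := by
      intro x; ext y; simp [fiber, Fin.snoc, Fin.castPred_zero]
    obtain ⟨hS, hdX⟩ := cond4_zero hd ⟨_, defH c⟩ {x : Fin 1 → ℤ | c + 1 < x 0}
      (fun x hx => by
        have hx' : c + 1 < x 0 := hx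
        have hfe : fiber ({v : Fin 2 → ℤ | c < v 1 ∧ v 0 = v 1 + 1} : Set (Fin 2 → ℤ)) x
            = {y : Fin 1 → ℤ | y 0 = x 0 - 1} := by
          rw [hfib x]; ext y; simp only [Set.mem_setOf_eq]; omega
        rw [hfe]
        exact ⟨defEQc (x 0 - 1), dSing hd rfl⟩)
      (fun x hx => by
        have hx' : ¬ c + 1 < x 0 := hx
        rw [hfib x]; ext y
        simp only [Set.mem_setOf_eq, Set.mem_empty_iff_false, iff_false]
        omega)
      (fun v hv => by
        have hv' : c < v 1 ∧ v 0 = v 1 + 1 := hv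
        simp only [Set.mem_setOf_eq, Function.comp_apply, Fin.castSucc_zero]
        omega)
    rw [hdX]
  have hdH' : ∀ c : ℤ, d 1 ⟨{v : Fin 2 → ℤ | v 1 < c ∧ v 0 = v 1 + 1}, defH' c⟩
      = d 0 ⟨{v : Fin 1 → ℤ | v 0 < c + 1}, defLTc (c + 1)⟩ := by
    intro c
    have hfib : ∀ x : Fin 1 → ℤ, fiber ({v : Fin 2 → ℤ | v 1 < c ∧ v 0 = v 1 + 1}) x
        = {y : Fin 1 → ℤ | y 0 < c ∧ x 0 = y 0 + 1} := by
      intro x; ext y; simp [fiber, Fin.snoc, Fin.castPred_zero]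
    obtain ⟨hS, hdX⟩ := cond4_zero hd ⟨_, defH' c⟩ {x : Fin 1 → ℤ | x 0 < c + 1}
      (fun x hx => by
        have hx' : x 0 < c + 1 := hx
        have hfe : fiber ({v : Fin 2 → ℤ | v 1 < c ∧ v 0 = v 1 + 1} : Set (Fin 2 → ℤ)) x
            = {y : Fin 1 → ℤ | y 0 = x 0 - 1} := by
          rw [hfib x]; ext y; simp only [Set.mem_setOf_eq]; omega
        rw [hfe]
        exact ⟨defEQc (x 0 - 1), dSing hd rfl⟩)
      (fun x hx => by
        have hx' : ¬ x 0 < c + 1 := hx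
        rw [hfib x]; ext y
        simp only [Set.mem_setOf_eq, Set.mem_empty_iff_false, iff_false]
        omega)
      (fun v hv => by
        have hv' : v 1 < c ∧ v 0 = v 1 + 1 := hv
        simp only [Set.mem_setOf_eq, Function.comp_apply, Fin.castSucc_zero]
        omega)
    rw [hdX]
  -- swapping coordinates
  have hswapG : ∀ c : ℤ, d 1 ⟨{v : Fin 2 → ℤ | c < v 1 ∧ v 0 = v 1 + 1}, defH c⟩
      = d 1 ⟨{v : Fin 2 → ℤ | c < v 0 ∧ v 1 = v 0 + 1}, defG c⟩ := by
    intro c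
    refine dSwapEq hd _ _ ?_
    ext y
    simp only [Set.mem_setOf_eq, Function.comp_apply, Equiv.swap_apply_left,
      Equiv.swap_apply_right]
  have hswapG' : ∀ c : ℤ, d 1 ⟨{v : Fin 2 → ℤ | v 1 < c ∧ v 0 = v 1 + 1}, defH' c⟩
      = d 1 ⟨{v : Fin 2 → ℤ | v 0 < c ∧ v 1 = v 0 + 1}, defG' c⟩ := by
    intro c
    refine dSwapEq hd _ _ ?_
    ext y
    simp only [Set.mem_setOf_eq, Function.comp_apply, Equiv.swap_apply_left,
      Equiv.swap_apply_right]
  -- A and B are constant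
  have hAsucc : ∀ c : ℤ, d 0 ⟨{v : Fin 1 → ℤ | c < v 0}, defGTc c⟩
      = d 0 ⟨{v : Fin 1 → ℤ | c + 1 < v 0}, defGTc (c + 1)⟩ := fun c =>
    (hdG c).symm.trans ((hswapG c).symm.trans (hdH c))
  have hBsucc : ∀ c : ℤ, d 0 ⟨{v : Fin 1 → ℤ | v 0 < c}, defLTc c⟩
      = d 0 ⟨{v : Fin 1 → ℤ | v 0 < c + 1}, defLTc (c + 1)⟩ := fun c =>
    (hdG' c).symm.trans ((hswapG' c).symm.trans (hdH' c))
  have hAconst : ∀ c : ℤ, d 0 ⟨{v : Fin 1 → ℤ | c < v 0}, defGTc c⟩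
      = d 0 ⟨{v : Fin 1 → ℤ | (0 : ℤ) < v 0}, defGTc 0⟩ := by
    intro c
    induction c using Int.induction_on with
    | zero => rfl
    | succ k ih => rw [← hAsucc (k : ℤ)]; exact ih
    | pred k ih =>
      have h := hAsucc (-(k : ℤ) - 1)
      rw [show (-(k : ℤ) - 1 + 1) = -(k : ℤ) by ring] at h
      rw [h]; exact ih
  have hBconst : ∀ c : ℤ, d 0 ⟨{v : Fin 1 → ℤ | v 0 < c}, defLTc c⟩
      = d 0 ⟨{v : Fin 1 → ℤ | v 0 < (0 : ℤ)}, defLTc 0⟩ := by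
    intro c
    induction c using Int.induction_on with
    | zero => rfl
    | succ k ih => rw [← hBsucc (k : ℤ)]; exact ih
    | pred k ih =>
      have h := hBsucc (-(k : ℤ) - 1)
      rw [show (-(k : ℤ) - 1 + 1) = -(k : ℤ) by ring] at h
      rw [h]; exact ih
  -- A is nonnegative
  have hA0 : (0 : WithBot ℕ) ≤ d 0 ⟨{v : Fin 1 → ℤ | (0 : ℤ) < v 0}, defGTc 0⟩ := by
    have hsub : {v : Fin 1 → ℤ | v 0 = 1} ⊆ {v : Fin 1 → ℤ | (0 : ℤ) < v 0} := by
      intro v hv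
      have h1 : v 0 = 1 := hv
      show (0 : ℤ) < v 0
      omega
    have hle := dMono hd (hS := defEQc 1) (hT := defGTc 0) hsub
    rwa [dSing hd rfl] at hle
  -- 1 = max (B 0) (max 0 (A 0))
  have hmid : d 0 ⟨{v : Fin 1 → ℤ | v 0 = 0} ∪ {v | (0 : ℤ) < v 0},
        (defEQc 0).union (defGTc 0)⟩
      = max (d 0 ⟨{v : Fin 1 → ℤ | v 0 = 0}, defEQc 0⟩)
          (d 0 ⟨{v : Fin 1 → ℤ | (0 : ℤ) < v 0}, defGTc 0⟩) :=
    dUnion hd _ _ rfl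
  have htot := dUnion hd (defLTc (0 : ℤ)) ((defEQc 0).union (defGTc 0))
    (hU := Set.definable_univ)
    (by
      ext v
      simp only [Set.mem_univ, Set.mem_union, Set.mem_setOf_eq, true_iff]
      omega)
  rw [dUniv hd rfl, hmid, dSing hd rfl] at htot
  have hcase : d 0 ⟨{v : Fin 1 → ℤ | (0 : ℤ) < v 0}, defGTc 0⟩ = 1 ∨
      d 0 ⟨{v : Fin 1 → ℤ | v 0 < (0 : ℤ)}, defLTc 0⟩ = 1 := by
    rcases wb_zero_one hA0 (dLe1 hd) with h | h
    · right
      refine wb_max_eq_one_left htot.symm ?_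
      rw [h]
      simp
    · left
      exact h
  rcases hcase with hA1 | hB1
  · -- Case A : d(Ioi c) = 1 for every c
    have hAval : ∀ c : ℤ, d 0 ⟨{v : Fin 1 → ℤ | c < v 0}, defGTc c⟩ = 1 := fun c =>
      (hAconst c).trans hA1
    -- X = {v | 0 < v 1 < v 0}, fibers are finite
    have hfibX : ∀ x : Fin 1 → ℤ, fiber ({v : Fin 2 → ℤ | 0 < v 1 ∧ v 1 < v 0}) x
        = {y : Fin 1 → ℤ | 0 < y 0 ∧ y 0 < x 0} := by
      intro x; ext y; simp [fiber, Fin.snoc, Fin.castPred_zero]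
    obtain ⟨hS, hdX⟩ := cond4_zero hd
      ⟨{v : Fin 2 → ℤ | 0 < v 1 ∧ v 1 < v 0}, defAnd (defGTc2 1 0) (defLT2 1 0)⟩
      {x : Fin 1 → ℤ | 1 < x 0}
      (fun x hx => by
        have hx' : 1 < x 0 := hx
        rw [show fiber ({v : Fin 2 → ℤ | 0 < v 1 ∧ v 1 < v 0} : Set (Fin 2 → ℤ)) x
          = {y : Fin 1 → ℤ | 0 < y 0 ∧ y 0 < x 0} from hfibX x]
        refine ⟨defAnd1 (defGTc 0) (defLTc (x 0)), dFinPos hd ?_ ⟨fun _ => 1, ?_⟩⟩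
        · exact fin1_preimage_finite (Set.finite_Ioo 0 (x 0))
        · show (0 : ℤ) < 1 ∧ (1 : ℤ) < x 0
          exact ⟨by norm_num, hx'⟩)
      (fun x hx => by
        have hx' : ¬ 1 < x 0 := hx
        rw [hfibX x]
        ext y
        simp only [Set.mem_setOf_eq, Set.mem_empty_iff_false, iff_false]
        omega)
      (fun v hv => by
        have hv' : 0 < v 1 ∧ v 1 < v 0 := hv
        simp only [Set.mem_setOf_eq, Function.comp_apply, Fin.castSucc_zero]
        omega)
    have hdX1 : d 1 ⟨{v : Fin 2 → ℤ | 0 < v 1 ∧ v 1 < v 0},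
        defAnd (defGTc2 1 0) (defLT2 1 0)⟩ = 1 := by
      rw [hdX]
      exact (dPI (d := d) hS (defGTc 1)).trans (hAval 1)
    have hYX : d 1 ⟨{v : Fin 2 → ℤ | 0 < v 0 ∧ v 0 < v 1},
          defAnd (defGTc2 0 0) (defLT2 0 1)⟩
        = d 1 ⟨{v : Fin 2 → ℤ | 0 < v 1 ∧ v 1 < v 0},
          defAnd (defGTc2 1 0) (defLT2 1 0)⟩ := by
      refine dSwapEq hd _ _ ?_
      ext y
      simp only [Set.mem_setOf_eq, Function.comp_apply, Equiv.swap_apply_left,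
        Equiv.swap_apply_right]
    have hfibY : ∀ x : Fin 1 → ℤ, fiber ({v : Fin 2 → ℤ | 0 < v 0 ∧ v 0 < v 1}) x
        = {y : Fin 1 → ℤ | 0 < x 0 ∧ x 0 < y 0} := by
      intro x; ext y; simp [fiber, Fin.snoc, Fin.castPred_zero]
    obtain ⟨hS', hdY⟩ := cond4_one hd
      ⟨{v : Fin 2 → ℤ | 0 < v 0 ∧ v 0 < v 1}, defAnd (defGTc2 0 0) (defLT2 0 1)⟩
      {x : Fin 1 → ℤ | 0 < x 0}
      (fun x hx => by
        have hx' : (0 : ℤ) < x 0 := hx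
        have hfe : fiber ({v : Fin 2 → ℤ | 0 < v 0 ∧ v 0 < v 1} : Set (Fin 2 → ℤ)) x
            = {y : Fin 1 → ℤ | x 0 < y 0} := by
          rw [hfibY x]; ext y; simp only [Set.mem_setOf_eq]; exact and_iff_right hx'
        rw [hfe]
        exact ⟨defGTc (x 0), (dPI _ (defGTc (x 0))).trans (hAval (x 0))⟩)
      (fun x hx => by
        have hx' : ¬ (0 : ℤ) < x 0 := hx
        rw [hfibY x]
        ext y
        simp only [Set.mem_setOf_eq, Set.mem_empty_iff_false, iff_false]
        omega)
      (fun v hv => by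
        have hv' : 0 < v 0 ∧ v 0 < v 1 := hv
        simp only [Set.mem_setOf_eq, Function.comp_apply, Fin.castSucc_zero]
        omega)
    rw [hYX, hdX1, (dPI (d := d) hS' (defGTc 0)).trans (hAval 0)] at hdY
    exact wb_one_ne_two hdY
  · -- Case B : d(Iio c) = 1 for every c
    have hBval : ∀ c : ℤ, d 0 ⟨{v : Fin 1 → ℤ | v 0 < c}, defLTc c⟩ = 1 := fun c =>
      (hBconst c).trans hB1
    have hfibX : ∀ x : Fin 1 → ℤ, fiber ({v : Fin 2 → ℤ | v 0 < v 1 ∧ v 1 < 0}) x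
        = {y : Fin 1 → ℤ | x 0 < y 0 ∧ y 0 < 0} := by
      intro x; ext y; simp [fiber, Fin.snoc, Fin.castPred_zero]
    obtain ⟨hS, hdX⟩ := cond4_zero hd
      ⟨{v : Fin 2 → ℤ | v 0 < v 1 ∧ v 1 < 0}, defAnd (defLT2 0 1) (defLTc2 1 0)⟩
      {x : Fin 1 → ℤ | x 0 < -1}
      (fun x hx => by
        have hx' : x 0 < -1 := hx
        rw [show fiber ({v : Fin 2 → ℤ | v 0 < v 1 ∧ v 1 < 0} : Set (Fin 2 → ℤ)) x
          = {y : Fin 1 → ℤ | x 0 < y 0 ∧ y 0 < 0} from hfibX x]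
        refine ⟨defAnd1 (defGTc (x 0)) (defLTc 0), dFinPos hd ?_ ⟨fun _ => -1, ?_⟩⟩
        · exact fin1_preimage_finite (Set.finite_Ioo (x 0) 0)
        · show x 0 < -1 ∧ (-1 : ℤ) < 0
          exact ⟨hx', by norm_num⟩)
      (fun x hx => by
        have hx' : ¬ x 0 < -1 := hx
        rw [hfibX x]
        ext y
        simp only [Set.mem_setOf_eq, Set.mem_empty_iff_false, iff_false]
        omega)
      (fun v hv => by
        have hv' : v 0 < v 1 ∧ v 1 < 0 := hv
        simp only [Set.mem_setOf_eq, Function.comp_apply, Fin.castSucc_zero]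
        omega)
    have hdX1 : d 1 ⟨{v : Fin 2 → ℤ | v 0 < v 1 ∧ v 1 < 0},
        defAnd (defLT2 0 1) (defLTc2 1 0)⟩ = 1 := by
      rw [hdX]
      exact (dPI (d := d) hS (defLTc (-1))).trans (hBval (-1))
    have hYX : d 1 ⟨{v : Fin 2 → ℤ | v 1 < v 0 ∧ v 0 < 0},
          defAnd (defLT2 1 0) (defLTc2 0 0)⟩
        = d 1 ⟨{v : Fin 2 → ℤ | v 0 < v 1 ∧ v 1 < 0},
          defAnd (defLT2 0 1) (defLTc2 1 0)⟩ := by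
      refine dSwapEq hd _ _ ?_
      ext y
      simp only [Set.mem_setOf_eq, Function.comp_apply, Equiv.swap_apply_left,
        Equiv.swap_apply_right]
    have hfibY : ∀ x : Fin 1 → ℤ, fiber ({v : Fin 2 → ℤ | v 1 < v 0 ∧ v 0 < 0}) x
        = {y : Fin 1 → ℤ | y 0 < x 0 ∧ x 0 < 0} := by
      intro x; ext y; simp [fiber, Fin.snoc, Fin.castPred_zero]
    obtain ⟨hS', hdY⟩ := cond4_one hd
      ⟨{v : Fin 2 → ℤ | v 1 < v 0 ∧ v 0 < 0}, defAnd (defLT2 1 0) (defLTc2 0 0)⟩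
      {x : Fin 1 → ℤ | x 0 < 0}
      (fun x hx => by
        have hx' : x 0 < (0 : ℤ) := hx
        have hfe : fiber ({v : Fin 2 → ℤ | v 1 < v 0 ∧ v 0 < 0} : Set (Fin 2 → ℤ)) x
            = {y : Fin 1 → ℤ | y 0 < x 0} := by
          rw [hfibY x]; ext y; simp only [Set.mem_setOf_eq]; exact and_iff_left hx'
        rw [hfe]
        exact ⟨defLTc (x 0), (dPI _ (defLTc (x 0))).trans (hBval (x 0))⟩)
      (fun x hx => by
        have hx' : ¬ x 0 < (0 : ℤ) := hx
        rw [hfibY x]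
        ext y
        simp only [Set.mem_setOf_eq, Set.mem_empty_iff_false, iff_false]
        omega)
      (fun v hv => by
        have hv' : v 1 < v 0 ∧ v 0 < 0 := hv
        simp only [Set.mem_setOf_eq, Function.comp_apply, Fin.castSucc_zero]
        omega)
    rw [hYX, hdX1, (dPI (d := d) hS' (defLTc 0)).trans (hBval 0)] at hdY
    exact wb_one_ne_two hdY

end ConcreteNoDim


/-- The structures `(ℕ, <)` and `(ℤ, <)` admit no dimension function. -/
theorem statement_6 :
    @nDim Language.order ℕ (Language.orderStructure ℕ) = 0 ∧
    @nDim Language.order ℤ (Language.orderStructure ℤ) = 0 := by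
  constructor
  · refine Cardinal.mk_eq_zero_iff.mpr ?_
    exact ⟨fun x => nat_no_dimfun x.1 x.2⟩
  · refine Cardinal.mk_eq_zero_iff.mpr ?_
    exact ⟨fun x => int_no_dimfun x.1 x.2⟩

end PaperDim
end

section
/- Let 𝓜 = (M,<,…) be an expansion of a linear order and dim : Def(𝓜) → ℕ ∪ {−∞} a dimension function. Let X be a nonempty definable subset of M such that either (i) dim({x ∈ X | x < a}) ≤ 0 for every a ∈ X, or (ii) dim({x ∈ X | x > a}) ≤ 0 for every a ∈ X. Then dim X = 0. -/
open FirstOrder FirstOrder.Language Set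

universe u v w

namespace PaperDim

section Statement10Aux

variable {L : FirstOrder.Language.{v, w}} {M : Type u} [L.Structure M]

lemma fin1_eta (v : Fin 1 → M) : (fun _ => v 0) = v :=
  funext fun i => congrArg v (Subsingleton.elim 0 i)

lemma snoc_fin1 (x : Fin 1 → M) (m : M) : (Fin.snoc x m : Fin 2 → M) = ![x 0, m] := by
  funext i
  fin_cases i <;> simp [Fin.snoc] <;>
    exact congrArg x (Subsingleton.elim _ _)

lemma fiber_pair (p : M → M → Prop) (x : Fin 1 → M) :
    fiber {v : Fin 2 → M | p (v 0) (v 1)} x = {y : Fin 1 → M | p (x 0) (y 0)} := by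
  ext y
  simp [fiber, snoc_fin1]

lemma definable_fiber {n : ℕ} {s : Set (Fin (n + 1) → M)}
    (hs : Set.Definable (Set.univ : Set M) L s) (x : Fin n → M) :
    Set.Definable (Set.univ : Set M) L (fiber s x) := by
  obtain ⟨φ, hφ⟩ := hs
  refine ⟨φ.subst (Fin.snoc (fun j => (L.con (⟨x j, trivial⟩ : (Set.univ : Set M))).term)
      (Term.var (0 : Fin 1))), ?_⟩
  ext y
  have hassign : (fun i => Term.realize y
      ((Fin.snoc (fun j => (L.con (⟨x j, trivial⟩ : (Set.univ : Set M))).term)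
        (Term.var (0 : Fin 1)) : Fin (n + 1) → _) i)) = Fin.snoc x (y 0) := by
    funext i
    refine Fin.lastCases ?_ (fun j => ?_) i
    · simp
    · simp
  simp only [fiber, Set.mem_setOf_eq, hφ, Formula.Realize, BoundedFormula.realize_subst, hassign]

lemma definable_singleton1 (a : M) :
    Set.Definable (Set.univ : Set M) L ({fun _ => a} : Set (Fin 1 → M)) := by
  refine ⟨Term.equal (Term.var (0 : Fin 1)) ((L.con (⟨a, trivial⟩ : (Set.univ : Set M))).term),
    ?_⟩
  ext v
  simp only [Set.mem_singleton_iff, Set.mem_setOf_eq, Formula.realize_equal,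
    Term.realize_var, Term.realize_con]
  constructor
  · rintro rfl; rfl
  · intro h
    funext i
    rw [Subsingleton.elim i 0, h]

lemma withbot_nat_eq_one {z : WithBot ℕ} (h0 : ¬ z ≤ 0) (h1 : z ≤ 1) : z = 1 := by
  induction z using WithBot.recBotCoe with
  | bot => exact absurd bot_le h0
  | coe n =>
    have hn0 : ¬ n ≤ 0 := fun hh => h0 (by
      rw [← WithBot.coe_zero]
      exact WithBot.coe_le_coe.mpr hh)
    have hn1 : n ≤ 1 := WithBot.coe_le_coe.mp (by rw [WithBot.coe_one]; exact h1)
    have hn : n = 1 := by omega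
    rw [hn]
    exact WithBot.coe_one

/-- Main engine for Statement 10, stated for an abstract relation `r`. -/
lemma statement_10_key (r : M → M → Prop)
    (htri : ∀ x a : M, x = a ∨ r x a ∨ r a x)
    (hr : Set.Definable (Set.univ : Set M) L {v : Fin 2 → M | r (v 0) (v 1)})
    (d : ∀ n : ℕ, DefSet L M (n + 1) → WithBot ℕ) (hd : d ∈ DimFuns L M)
    (X : DefSet L M 1) (hne : X.1.Nonempty)
    (h : ∀ a : M, (fun _ => a) ∈ X.1 → ∀ Y : DefSet L M 1,
        Y.1 = {v | v ∈ X.1 ∧ r (v 0) a} → d 0 Y ≤ 0) :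
    d 0 X = 0 := by
  obtain ⟨⟨h1e, h1s, h1u⟩, h2, h3, h4⟩ := hd
  -- basic dimension lemmas
  have dcongr : ∀ {n : ℕ} (A B : DefSet L M (n + 1)), A.1 = B.1 → d n A = d n B := by
    intro n A B hAB
    exact congrArg (d n) (Subtype.ext hAB)
  have dmono : ∀ {n : ℕ} (A B : DefSet L M (n + 1)), A.1 ⊆ B.1 → d n A ≤ d n B := by
    intro n A B hAB
    have := h2 n A B B (Set.union_eq_self_of_subset_left hAB).symm
    rw [this]
    exact le_max_left _ _
  have d_le_one : ∀ A : DefSet L M 1, d 0 A ≤ 1 := by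
    intro A
    have := h1u ⟨Set.univ, Set.definable_univ⟩ rfl
    calc d 0 A ≤ d 0 ⟨Set.univ, Set.definable_univ⟩ := dmono _ _ (Set.subset_univ _)
      _ = 1 := this
  have d_nonneg : ∀ A : DefSet L M 1, A.1.Nonempty → (0 : WithBot ℕ) ≤ d 0 A := by
    rintro A ⟨v, hv⟩
    have hsub : ({fun _ => v 0} : Set (Fin 1 → M)) ⊆ A.1 := by
      rintro w rfl
      rwa [fin1_eta v]
    calc (0 : WithBot ℕ) = d 0 ⟨{fun _ => v 0}, definable_singleton1 (v 0)⟩ :=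
          (h1s _ (v 0) rfl).symm
      _ ≤ d 0 A := dmono _ _ hsub
  set XS := X.1 with hXS
  -- definability of the basic building blocks
  have hmem0 : Set.Definable (Set.univ : Set M)
      L {v : Fin 2 → M | (fun _ => v 0) ∈ XS} := by
    exact X.2.preimage_comp (fun _ : Fin 1 => (0 : Fin 2))
  have hmem1 : Set.Definable (Set.univ : Set M)
      L {v : Fin 2 → M | (fun _ => v 1) ∈ XS} := by
    exact X.2.preimage_comp (fun _ : Fin 1 => (1 : Fin 2))
  have hrsw : Set.Definable (Set.univ : Set M) L {v : Fin 2 → M | r (v 1) (v 0)} := by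
    exact hr.preimage_comp (![1, 0] : Fin 2 → Fin 2)
  -- the two double sets
  set p : M → M → Prop := fun a b => (fun _ => a) ∈ XS ∧ (fun _ => b) ∈ XS ∧ r b a with hp
  set q : M → M → Prop := fun a b => (fun _ => a) ∈ XS ∧ (fun _ => b) ∈ XS ∧ r a b with hq
  have hYdef : Set.Definable (Set.univ : Set M) L {v : Fin 2 → M | p (v 0) (v 1)} := by
    exact hmem0.inter (hmem1.inter hrsw)
  have hY'def : Set.Definable (Set.univ : Set M) L {v : Fin 2 → M | q (v 0) (v 1)} := by
    exact hmem0.inter (hmem1.inter hr)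
  set Y : DefSet L M 2 := ⟨{v : Fin 2 → M | p (v 0) (v 1)}, hYdef⟩ with hYdefn
  set Y' : DefSet L M 2 := ⟨{v : Fin 2 → M | q (v 0) (v 1)}, hY'def⟩ with hY'defn
  -- the fibers of Y are the truncations, hence of dimension ≤ 0
  have hfibY : ∀ x : Fin 1 → M, fiber Y.1 x = {y : Fin 1 → M | p (x 0) (y 0)} :=
    fun x => fiber_pair p x
  have hfibY' : ∀ x : Fin 1 → M, fiber Y'.1 x = {y : Fin 1 → M | q (x 0) (y 0)} :=
    fun x => fiber_pair q x
  -- fibers of Y have dimension ≤ 0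
  have hfibY_le : ∀ (x : Fin 1 → M) (hf : Set.Definable (Set.univ : Set M) L (fiber Y.1 x)),
      d 0 ⟨fiber Y.1 x, hf⟩ ≤ 0 := by
    intro x hf
    by_cases hx : (fun _ => x 0) ∈ XS
    · refine h (x 0) hx ⟨fiber Y.1 x, hf⟩ ?_
      show fiber Y.1 x = _
      rw [hfibY]
      ext y
      simp only [Set.mem_setOf_eq, hp]
      constructor
      · rintro ⟨-, hy, hry⟩
        exact ⟨by rwa [fin1_eta] at hy, hry⟩
      · rintro ⟨hy, hry⟩
        exact ⟨hx, by rwa [fin1_eta], hry⟩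
    · have : fiber Y.1 x = ∅ := by
        rw [hfibY]
        ext y
        simp only [Set.mem_setOf_eq, hp, Set.mem_empty_iff_false, iff_false]
        rintro ⟨hx', -⟩
        exact hx hx'
      rw [h1e _ this]
      exact bot_le
  -- Step D : d 1 Y ≤ 1
  obtain ⟨Z0, W0, hZ0, hW0, hdW0⟩ := h4 0 Y 0
  have hYsub : Y.1 ⊆ (fun z : Fin 2 → M => z ∘ Fin.castSucc) ⁻¹' Z0.1 := by
    intro v hv
    have hv' : p (v 0) (v 1) := hv
    have hcs : (v ∘ Fin.castSucc : Fin 1 → M) 0 = v 0 := rfl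
    simp only [Set.mem_preimage, hZ0, Set.mem_setOf_eq]
    refine ⟨definable_fiber Y.2 _, ?_⟩
    have hle := hfibY_le (v ∘ Fin.castSucc) (definable_fiber Y.2 _)
    have hge : (0 : WithBot ℕ) ≤ d 0 ⟨fiber Y.1 (v ∘ Fin.castSucc), definable_fiber Y.2 _⟩ := by
      refine d_nonneg _ ⟨fun _ => v 1, ?_⟩
      show (fun _ => v 1) ∈ fiber Y.1 (v ∘ Fin.castSucc)
      rw [hfibY]
      simp only [Set.mem_setOf_eq, hcs]
      exact hv'
    have : d 0 ⟨fiber Y.1 (v ∘ Fin.castSucc), definable_fiber Y.2 _⟩ = 0 :=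
      le_antisymm hle hge
    simpa using this
  have hW0Y : W0.1 = Y.1 := by
    rw [hW0, Set.inter_eq_left]
    exact hYsub
  have hdY_le : d 1 Y ≤ 1 := by
    have : d 1 Y = d 0 Z0 := by
      rw [dcongr Y W0 hW0Y.symm, hdW0]
      simp
    rw [this]
    exact d_le_one Z0
  -- Dichotomy
  by_cases hcase : ∃ a : M, (fun _ => a) ∈ XS ∧ ∀ hU : Set.Definable (Set.univ : Set M) L
      {y : Fin 1 → M | q a (y 0)}, d 0 ⟨{y : Fin 1 → M | q a (y 0)}, hU⟩ ≤ 0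
  · obtain ⟨a, ha, hUa⟩ := hcase
    -- X = lower ∪ {a} ∪ upper, all of dimension ≤ 0
    have hLdef : Set.Definable (Set.univ : Set M) L {y : Fin 1 → M | p a (y 0)} := by
      have := definable_fiber hYdef (fun _ => a)
      rwa [fiber_pair] at this
    have hUdef : Set.Definable (Set.univ : Set M) L {y : Fin 1 → M | q a (y 0)} := by
      have := definable_fiber hY'def (fun _ => a)
      rwa [fiber_pair] at this
    set Lw : DefSet L M 1 := ⟨{y : Fin 1 → M | p a (y 0)}, hLdef⟩
    set Up : DefSet L M 1 := ⟨{y : Fin 1 → M | q a (y 0)}, hUdef⟩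
    have hdL : d 0 Lw ≤ 0 := by
      refine h a ha Lw ?_
      ext y
      simp only [Set.mem_setOf_eq, hp]
      constructor
      · rintro ⟨-, hy, hry⟩
        exact ⟨by rwa [fin1_eta] at hy, hry⟩
      · rintro ⟨hy, hry⟩
        exact ⟨ha, by rwa [fin1_eta], hry⟩
    have hdU : d 0 Up ≤ 0 := hUa hUdef
    set Sg : DefSet L M 1 := ⟨{fun _ => a}, definable_singleton1 a⟩
    have hdSg : d 0 Sg = 0 := h1s Sg a rfl
    set T1 : DefSet L M 1 := ⟨Sg.1 ∪ Up.1, Sg.2.union Up.2⟩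
    have hdT1 : d 0 T1 = max (d 0 Sg) (d 0 Up) := h2 0 Sg Up T1 rfl
    have hXeq : XS = Lw.1 ∪ T1.1 := by
      ext y
      constructor
      · intro hy
        rcases htri (y 0) a with hya | hya | hya
        · refine Or.inr (Or.inl ?_)
          rw [Set.mem_singleton_iff, ← fin1_eta y, hya]
        · exact Or.inl ⟨ha, by rwa [fin1_eta], hya⟩
        · exact Or.inr (Or.inr ⟨ha, by rwa [fin1_eta], hya⟩)
      · rintro (⟨-, hy, -⟩ | hy | ⟨-, hy, -⟩)
        · rwa [fin1_eta] at hy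
        · rw [Set.mem_singleton_iff] at hy
          rw [hy]; exact ha
        · rwa [fin1_eta] at hy
    have hdX : d 0 X = max (d 0 Lw) (d 0 T1) := h2 0 Lw T1 X hXeq
    have hle : d 0 X ≤ 0 := by
      rw [hdX, hdT1]
      refine max_le hdL (max_le (le_of_eq hdSg) hdU)
    exact le_antisymm hle (d_nonneg X hne)
  · -- all upper truncations at points of X have dimension 1 : contradiction
    exfalso
    push_neg at hcase
    have hUone : ∀ a : M, (fun _ => a) ∈ XS →
        ∀ hU : Set.Definable (Set.univ : Set M) L {y : Fin 1 → M | q a (y 0)},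
        d 0 ⟨{y : Fin 1 → M | q a (y 0)}, hU⟩ = 1 := by
      intro a ha hU
      obtain ⟨hU', hgt⟩ := hcase a ha
      have heqsub : (⟨{y : Fin 1 → M | q a (y 0)}, hU'⟩ : DefSet L M 1)
          = ⟨{y : Fin 1 → M | q a (y 0)}, hU⟩ := Subtype.ext rfl
      rw [heqsub] at hgt
      exact withbot_nat_eq_one (not_le.mpr hgt) (d_le_one _)
    -- d 1 Y' = d 1 Y via the coordinate swap
    have hswap : Y'.1 = {y : Fin 2 → M | y ∘ (Equiv.swap (0 : Fin 2) 1) ∈ Y.1} := by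
      ext y
      simp only [Set.mem_setOf_eq, hY'defn, hYdefn]
      have h0 : (y ∘ (Equiv.swap (0 : Fin 2) 1)) 0 = y 1 := by
        simp [Function.comp, Equiv.swap_apply_left]
      have h1' : (y ∘ (Equiv.swap (0 : Fin 2) 1)) 1 = y 0 := by
        simp [Function.comp, Equiv.swap_apply_right]
      rw [show ((y ∘ (Equiv.swap (0 : Fin 2) 1) : Fin 2 → M) 0) = y 1 from h0,
        show ((y ∘ (Equiv.swap (0 : Fin 2) 1) : Fin 2 → M) 1) = y 0 from h1']
      simp only [hp, hq]
      tauto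
    have hdY'Y : d 1 Y' = d 1 Y := h3 1 (Equiv.swap (0 : Fin 2) 1) Y Y' hswap
    -- apply condition (4) with i = 1 to Y'
    obtain ⟨A, W1, hA, hW1, hdW1⟩ := h4 0 Y' 1
    have hAX : A.1 = XS := by
      rw [hA]
      ext x
      simp only [Set.mem_setOf_eq]
      constructor
      · rintro ⟨hf, hd1⟩
        by_contra hx
        have hx' : (fun _ => x 0) ∈ XS → False := fun hh => hx (by rwa [fin1_eta] at hh)
        have hemp : fiber Y'.1 x = ∅ := by
          rw [hfibY']
          ext y
          simp only [Set.mem_setOf_eq, hq, Set.mem_empty_iff_false, iff_false]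
          rintro ⟨hh, -⟩
          exact hx' hh
        rw [h1e _ hemp] at hd1
        simp at hd1
      · intro hx
        have hx' : (fun _ => x 0) ∈ XS := by rwa [fin1_eta]
        refine ⟨definable_fiber Y'.2 x, ?_⟩
        have heq : fiber Y'.1 x = {y : Fin 1 → M | q (x 0) (y 0)} := hfibY' x
        have hdef2 : Set.Definable (Set.univ : Set M) L {y : Fin 1 → M | q (x 0) (y 0)} := by
          rw [← heq]; exact definable_fiber Y'.2 x
        have hdceq := dcongr ⟨fiber Y'.1 x, definable_fiber Y'.2 x⟩
          ⟨{y : Fin 1 → M | q (x 0) (y 0)}, hdef2⟩ heq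
        rw [hdceq, hUone (x 0) hx' hdef2]
        simp
    have hdA : d 0 A = d 0 X := dcongr A X hAX
    -- lower bound: d 0 X ≥ 1
    obtain ⟨v, hv⟩ := hne
    have hv' : (fun _ => v 0) ∈ XS := by rwa [fin1_eta]
    have hUdef : Set.Definable (Set.univ : Set M) L {y : Fin 1 → M | q (v 0) (y 0)} := by
      have := definable_fiber hY'def (fun _ => v 0)
      rwa [fiber_pair] at this
    have hX1 : (1 : WithBot ℕ) ≤ d 0 X := by
      have hU1 := hUone (v 0) hv' hUdef
      have hsub : {y : Fin 1 → M | q (v 0) (y 0)} ⊆ XS := by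
        rintro y ⟨-, hy, -⟩
        rwa [fin1_eta] at hy
      calc (1 : WithBot ℕ) = d 0 ⟨{y : Fin 1 → M | q (v 0) (y 0)}, hUdef⟩ := hU1.symm
        _ ≤ d 0 X := dmono _ _ hsub
    -- upper bound yields a contradiction
    have hW1le : d 1 W1 ≤ d 1 Y' := by
      refine dmono _ _ ?_
      rw [hW1]
      exact Set.inter_subset_left
    rw [hdW1, hdA] at hW1le
    have hfin : d 0 X + ((1 : ℕ) : WithBot ℕ) ≤ 1 := le_trans hW1le (hdY'Y ▸ hdY_le)
    have h2le : (1 : WithBot ℕ) + 1 ≤ 1 := by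
      calc (1 : WithBot ℕ) + 1 ≤ d 0 X + ((1 : ℕ) : WithBot ℕ) := by
            refine add_le_add hX1 ?_
            simp
        _ ≤ 1 := hfin
    norm_num at h2le

end Statement10Aux

/-- Let `M` be an expansion of a linear order, `dim` a dimension function
and `X` a nonempty definable subset of `M` such that either all truncations
`{x ∈ X | x < a}` (`a ∈ X`) have dimension `≤ 0`, or all truncations `{x ∈ X | x > a}`
(`a ∈ X`) have dimension `≤ 0`. Then `dim X = 0`. -/
theorem statement_10 (L : FirstOrder.Language.{v, w}) (M : Type u) [L.Structure M]
    [LinearOrder M] (hlt : LtDefinable L M)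
    (d : ∀ n : ℕ, DefSet L M (n + 1) → WithBot ℕ) (hd : d ∈ DimFuns L M)
    (X : DefSet L M 1) (hne : X.1.Nonempty)
    (h : (∀ a : M, (fun _ => a) ∈ X.1 → ∀ Y : DefSet L M 1,
            Y.1 = {v | v ∈ X.1 ∧ v 0 < a} → d 0 Y ≤ 0) ∨
         (∀ a : M, (fun _ => a) ∈ X.1 → ∀ Y : DefSet L M 1,
            Y.1 = {v | v ∈ X.1 ∧ a < v 0} → d 0 Y ≤ 0)) :
    d 0 X = 0 := by
  rcases h with h | h
  · refine statement_10_key (fun x y => x < y) (fun x a => ?_) hlt d hd X hne h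
    rcases lt_trichotomy x a with hxa | hxa | hxa
    · exact Or.inr (Or.inl hxa)
    · exact Or.inl hxa
    · exact Or.inr (Or.inr hxa)
  · refine statement_10_key (fun x y => y < x) (fun x a => ?_) ?_ d hd X hne h
    · rcases lt_trichotomy x a with hxa | hxa | hxa
      · exact Or.inr (Or.inr hxa)
      · exact Or.inl hxa
      · exact Or.inr (Or.inl hxa)
    · exact hlt.preimage_comp (![1, 0] : Fin 2 → Fin 2)

end PaperDim
end
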